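/- The trace ε_α is a counit for the comultiplication Δ: for every a ∈ A_α, applying ε_α ⊗ id to Δ(a) and identifying R_α ⊗_{R_α} A_α with A_α gives back a, and likewise applying id ⊗ ε_α to Δ(a) and identifying A_α ⊗_{R_α} R_α with A_α gives back a. -/

import Mathlib

open Polynomial TensorProduct

noncomputable section

/-- `R_α = ℤ[α₀, α₁]`, the polynomial ring in two variables over `ℤ`. -/
abbrev Rα : Type := MvPolynomial (Fin 2) ℤ

/-- `α₀ ∈ R_α`. -/
abbrev α0 : Rα := MvPolynomial.X 0

/-- `α₁ ∈ R_α`. -/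
abbrev α1 : Rα := MvPolynomial.X 1

/-- `A_α = R_α[X]/((X - α₀)(X - α₁))`. -/
abbrev Aα : Type := AdjoinRoot ((X - C α0) * (X - C α1))

/-- `X`, the image of the variable in `A_α`. -/
abbrev Xα : Aα := AdjoinRoot.root ((X - C α0) * (X - C α1))

/-- The structure map `R_α → A_α`. -/
abbrev aα : Rα → Aα := algebraMap Rα Aα

/-- The trace `ε_α` (determined by `ε_α(1) = 0`, `ε_α(X) = 1`) is a counit for the
comultiplication `Δ` (determined by `Δ(1) = (X - α₀) ⊗ 1 + 1 ⊗ (X - α₁)` and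
`Δ(X) = X ⊗ X - α₀α₁ (1 ⊗ 1)`): for every `a ∈ A_α`, `(ε_α ⊗ id)(Δ a) = a` under
the identification `R_α ⊗ A_α ≅ A_α`, and `(id ⊗ ε_α)(Δ a) = a` under
the identification `A_α ⊗ R_α ≅ A_α`. -/
theorem stmt3 (ε : Aα →ₗ[Rα] Rα) (hε1 : ε 1 = 0) (hεX : ε Xα = 1)
    (Δ : Aα →ₗ[Rα] Aα ⊗[Rα] Aα)
    (hΔ1 : Δ 1 = (Xα - aα α0) ⊗ₜ[Rα] 1 + 1 ⊗ₜ[Rα] (Xα - aα α1))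
    (hΔX : Δ Xα = Xα ⊗ₜ[Rα] Xα - (α0 * α1) • ((1 : Aα) ⊗ₜ[Rα] (1 : Aα))) :
    ∀ a : Aα,
      (TensorProduct.lid Rα Aα) ((LinearMap.rTensor Aα ε) (Δ a)) = a ∧
      (TensorProduct.rid Rα Aα) ((LinearMap.lTensor Aα ε) (Δ a)) = a := by
  have hm : ((X - C α0) * (X - C α1)).Monic := (monic_X_sub_C α0).mul (monic_X_sub_C α1)
  set pb := AdjoinRoot.powerBasis' hm with hpb
  have hdim : pb.dim = 2 := by
    simp [hpb, AdjoinRoot.powerBasis', (monic_X_sub_C α0).natDegree_mul (monic_X_sub_C α1)]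
  have hspan : Submodule.span Rα ({1, Xα} : Set Aα) = ⊤ := by
    rw [eq_top_iff, ← pb.basis.span_eq, Submodule.span_le]
    rintro x ⟨i, rfl⟩
    rw [pb.basis_eq_pow i]
    have hi : (i : ℕ) < 2 := Nat.lt_of_lt_of_le i.isLt hdim.le
    interval_cases h : (i : ℕ)
    · simpa using Submodule.subset_span (show (1 : Aα) ∈ ({1, Xα} : Set Aα) by simp)
    · simpa [hpb, AdjoinRoot.powerBasis'] using Submodule.subset_span (show Xα ∈ ({1, Xα} : Set Aα) by simp)
  have hεα0 : ε (aα α0) = 0 := by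
    have : aα α0 = α0 • (1 : Aα) := by rw [Algebra.smul_def, mul_one]
    rw [this, map_smul, hε1, smul_zero]
  have hεα1 : ε (aα α1) = 0 := by
    have : aα α1 = α1 • (1 : Aα) := by rw [Algebra.smul_def, mul_one]
    rw [this, map_smul, hε1, smul_zero]
  intro a
  have ha : a ∈ Submodule.span Rα ({1, Xα} : Set Aα) := hspan ▸ Submodule.mem_top
  induction ha using Submodule.span_induction with
  | mem x hx =>
    rcases hx with rfl | rfl
    · constructor
      · simp [hΔ1, map_sub, hεX, hε1, hεα0, hεα1, TensorProduct.sub_tmul,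
          TensorProduct.tmul_sub]
      · simp [hΔ1, map_sub, hεX, hε1, hεα0, hεα1, TensorProduct.sub_tmul,
          TensorProduct.tmul_sub]
    · constructor
      · simp [hΔX, map_sub, hεX, hε1, TensorProduct.smul_tmul']
      · simp [hΔX, map_sub, hεX, hε1, TensorProduct.smul_tmul']
  | zero => simp
  | add x y hx hy ihx ihy =>
    exact ⟨by simp [map_add, ihx.1, ihy.1], by simp [map_add, ihx.2, ihy.2]⟩
  | smul r x hx ih =>
    exact ⟨by simp [map_smul, ih.1], by simp [map_smul, ih.2]⟩
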